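/- arXiv:2404.17081 — 8 statements merged into one kernel-verified Lean document; each statement's English description precedes it below -/
import Mathlib

section
/- The map π : ℝ³ → ℝ², π(a,b,c) = (4a−2b−2c, 2b−2c), restricted to the set Δ = {(a,b,c) : a,b,c ≥ 0 and a+b+c = 2·max{a,b,c}}, is a bijection onto ℝ². -/
noncomputable def cpProj (p : ℝ × ℝ × ℝ) : ℝ × ℝ :=
  (4 * p.1 - 2 * p.2.1 - 2 * p.2.2, 2 * p.2.1 - 2 * p.2.2)

def triangleDelta : Set (ℝ × ℝ × ℝ) :=
  {p | 0 ≤ p.1 ∧ 0 ≤ p.2.1 ∧ 0 ≤ p.2.2 ∧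
    p.1 + p.2.1 + p.2.2 = 2 * max p.1 (max p.2.1 p.2.2)}

lemma delta_face {a b c : ℝ} (h : a + b + c = 2 * max a (max b c)) :
    a = b + c ∨ b = a + c ∨ c = a + b := by
  rcases max_cases a (max b c) with ⟨h3, _⟩ | ⟨h3, _⟩
  · left; rw [h3] at h; linarith
  · rw [h3] at h
    rcases max_cases b c with ⟨h4, _⟩ | ⟨h4, _⟩
    · right; left; rw [h4] at h; linarith
    · right; right; rw [h4] at h; linarith

lemma delta_mem {a b c : ℝ} (ha : 0 ≤ a) (hb : 0 ≤ b) (hc : 0 ≤ c)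
    (h : a = b + c ∨ b = a + c ∨ c = a + b) : (a, b, c) ∈ triangleDelta := by
  refine ⟨ha, hb, hc, ?_⟩
  rcases h with h | h | h
  · have : max a (max b c) = a := max_eq_left (max_le (by linarith) (by linarith))
    simp only [this]; linarith
  · have h1 : max b c = b := max_eq_left (by linarith)
    have : max a (max b c) = b := by rw [h1]; exact max_eq_right (by linarith)
    simp only [this]; linarith
  · have h1 : max b c = c := max_eq_right (by linarith)
    have : max a (max b c) = c := by rw [h1]; exact max_eq_right (by linarith)
    simp only [this]; linarith

theorem cpProj_bijOn_triangleDelta :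
    Set.BijOn cpProj triangleDelta Set.univ := by
  refine ⟨fun p _ => Set.mem_univ _, ?_, ?_⟩
  · -- InjOn
    rintro ⟨a1, b1, c1⟩ ⟨ha1, hb1, hc1, hm1⟩ ⟨a2, b2, c2⟩ ⟨ha2, hb2, hc2, hm2⟩ heq
    simp only at ha1 hb1 hc1 hm1 ha2 hb2 hc2 hm2
    have h1 := congrArg Prod.fst heq
    have h2 := congrArg Prod.snd heq
    simp only [cpProj] at h1 h2
    rcases delta_face hm1 with hf1 | hf1 | hf1 <;>
      rcases delta_face hm2 with hf2 | hf2 | hf2 <;>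
      (simp only [Prod.mk.injEq]; refine ⟨?_, ?_, ?_⟩ <;> linarith)
  · -- SurjOn
    rintro ⟨x, y⟩ -
    by_cases hx : |y| ≤ x
    · rw [abs_le] at hx
      refine ⟨(x / 2, (x + y) / 4, (x - y) / 4), ?_, ?_⟩
      · exact delta_mem (by linarith [hx.1, hx.2]) (by linarith [hx.1])
          (by linarith [hx.2]) (Or.inl (by ring))
      · simp only [cpProj, Prod.mk.injEq]; constructor <;> ring
    · push_neg at hx
      rcases le_total 0 y with hy | hy
      · rw [abs_of_nonneg hy] at hx
        refine ⟨(y / 2, (3 * y - x) / 4, (y - x) / 4), ?_, ?_⟩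
        · exact delta_mem (by linarith) (by linarith) (by linarith)
            (Or.inr (Or.inl (by ring)))
        · simp only [cpProj, Prod.mk.injEq]; constructor <;> ring
      · rw [abs_of_nonpos hy] at hx
        refine ⟨(-y / 2, (-x - y) / 4, (-x - 3 * y) / 4), ?_, ?_⟩
        · exact delta_mem (by linarith) (by linarith) (by linarith)
            (Or.inr (Or.inr (by ring)))
        · simp only [cpProj, Prod.mk.injEq]; constructor <;> ring
end

section
/- The map π : ℝ³ → ℝ², π(a,b,c) = (4a−2b−2c, 2b−2c), restricted to Δ = {(a,b,c) : a,b,c ≥ 0, a+b+c = 2·max{a,b,c}}, is a homeomorphism onto ℝ². -/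
noncomputable def gm (q : ℝ × ℝ) : ℝ := max (q.1 / 2) ((3 * |q.2| - q.1) / 4)

noncomputable def gfun (q : ℝ × ℝ) : ℝ × ℝ × ℝ :=
  ((q.1 + 4 * gm q) / 6, (8 * gm q - q.1 + 3 * q.2) / 12, (8 * gm q - q.1 - 3 * q.2) / 12)

lemma max3_eq (A B C M : ℝ) (hA : A ≤ M) (hB : B ≤ M) (hC : C ≤ M)
    (h : M ≤ A ∨ M ≤ B ∨ M ≤ C) : max A (max B C) = M := by
  refine le_antisymm (max_le hA (max_le hB hC)) ?_
  rcases h with h | h | h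
  · exact h.trans (le_max_left _ _)
  · exact h.trans ((le_max_left _ _).trans (le_max_right _ _))
  · exact h.trans ((le_max_right _ _).trans (le_max_right _ _))

lemma gm_le_1 (q : ℝ × ℝ) : q.1 / 2 ≤ gm q := le_max_left _ _
lemma gm_le_2 (q : ℝ × ℝ) : (3 * |q.2| - q.1) / 4 ≤ gm q := le_max_right _ _

lemma gm_max (q : ℝ × ℝ) :
    max ((q.1 + 4 * gm q) / 6)
      (max ((8 * gm q - q.1 + 3 * q.2) / 12) ((8 * gm q - q.1 - 3 * q.2) / 12)) = gm q := by
  obtain ⟨x, y⟩ := q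
  simp only [gm]
  rcases abs_cases y with ⟨h1, h2⟩ | ⟨h1, h2⟩ <;> rw [h1]
  · rcases max_cases (x / 2) ((3 * y - x) / 4) with ⟨hm, hm'⟩ | ⟨hm, hm'⟩
    · exact max3_eq _ _ _ _ (by linarith) (by linarith) (by linarith) (Or.inl (by linarith))
    · exact max3_eq _ _ _ _ (by linarith) (by linarith) (by linarith)
        (Or.inr (Or.inl (by linarith)))
  · rcases max_cases (x / 2) ((3 * -y - x) / 4) with ⟨hm, hm'⟩ | ⟨hm, hm'⟩
    · exact max3_eq _ _ _ _ (by linarith) (by linarith) (by linarith) (Or.inl (by linarith))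
    · exact max3_eq _ _ _ _ (by linarith) (by linarith) (by linarith)
        (Or.inr (Or.inr (by linarith)))

lemma gmem (q : ℝ × ℝ) : gfun q ∈ triangleDelta := by
  obtain ⟨x, y⟩ := q
  have hmax := gm_max (x, y)
  have h1 := gm_le_1 (x, y)
  have h2 := gm_le_2 (x, y)
  have h3 : -y ≤ |y| := neg_le_abs y
  have h4 : y ≤ |y| := le_abs_self y
  have h5 : (0:ℝ) ≤ |y| := abs_nonneg y
  simp only at h1 h2
  refine ⟨by simp only [gfun]; linarith, by simp only [gfun]; linarith,
    by simp only [gfun]; linarith, ?_⟩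
  simp only [gfun] at hmax ⊢
  rw [hmax]; ring

lemma proj_g (q : ℝ × ℝ) : cpProj (gfun q) = q := by
  obtain ⟨x, y⟩ := q
  simp only [cpProj, gfun, Prod.mk.injEq]
  exact ⟨by ring, by ring⟩

lemma g_proj (p : ℝ × ℝ × ℝ) (hp : p ∈ triangleDelta) : gfun (cpProj p) = p := by
  obtain ⟨a, b, c⟩ := p
  obtain ⟨ha, hb, hc, hs⟩ := hp
  simp only at ha hb hc hs
  have hkey : gm (cpProj (a, b, c)) = max a (max b c) := by
    simp only [gm, cpProj]
    rcases abs_cases (2 * b - 2 * c) with ⟨h1, h2⟩ | ⟨h1, h2⟩ <;> rw [h1] <;>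
      rcases max_cases b c with ⟨hbc, hbc'⟩ | ⟨hbc, hbc'⟩ <;>
      rcases max_cases a (max b c) with ⟨ham, ham'⟩ | ⟨ham, ham'⟩ <;>
      rw [hbc] at hs ham ham' ⊢ <;> rw [ham] at hs ⊢ <;>
      refine le_antisymm (max_le (by linarith) (by linarith)) ?_ <;>
      first
        | exact le_trans (by linarith) (le_max_left _ _)
        | exact le_trans (by linarith) (le_max_right _ _)
  simp only [gfun, cpProj] at hkey ⊢
  rw [hkey]
  have h2 : a + b + c = 2 * max a (max b c) := hs
  refine Prod.ext ?_ (Prod.ext ?_ ?_) <;> simp only <;> linarith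

theorem cpProj_homeomorph_triangleDelta :
    ∃ e : triangleDelta ≃ₜ (ℝ × ℝ), ∀ x : triangleDelta, e x = cpProj x := by
  refine ⟨{ toFun := fun p => cpProj p.1
            invFun := fun q => ⟨gfun q, gmem q⟩
            left_inv := fun p => Subtype.ext (g_proj p.1 p.2)
            right_inv := fun q => proj_g q
            continuous_toFun := ?_
            continuous_invFun := ?_ }, fun x => rfl⟩
  · exact (by unfold cpProj; fun_prop : Continuous cpProj).comp continuous_subtype_val
  · refine Continuous.subtype_mk ?_ _
    have hgm : Continuous gm := by
      unfold gm
      exact Continuous.max (by fun_prop) (by continuity)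
    unfold gfun
    fun_prop
end

section
/- The map π : ℝ³ → ℝ², π(a,b,c) = (4a−2b−2c, 2b−2c), restricted to the set 𝓗 = {(a,b,c) : a,b,c > 0 and cosh²a + cosh²b + cosh²c = 2·cosh a·cosh b·cosh c}, is injective. -/
def collarH : Set (ℝ × ℝ × ℝ) :=
  {p | 0 < p.1 ∧ 0 < p.2.1 ∧ 0 < p.2.2 ∧
    Real.cosh p.1 ^ 2 + Real.cosh p.2.1 ^ 2 + Real.cosh p.2.2 ^ 2 =
      2 * Real.cosh p.1 * Real.cosh p.2.1 * Real.cosh p.2.2}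

open Real Set Filter

set_option maxHeartbeats 1000000 in
private lemma collar_bcase (x y z u v w : ℝ) (hx : 1 < x) (hy : 1 < y) (hz : 1 < z)
    (hu : 0 < u) (hv : 0 < v) (hw : 0 < w)
    (hu2 : u^2 = x^2 - 1) (hv2 : v^2 = y^2 - 1) (hw2 : w^2 = z^2 - 1)
    (hc : x^2 + y^2 + z^2 = 2*x*y*z) (hbig : y*z < x) :
    u*x + v*y + w*z < u*(y*z) + v*(x*z) + w*(x*y) := by
  have hxy : y < x := by nlinarith
  have huv : v^2 < u^2 := by nlinarith
  have hq : y < x*z := by nlinarith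
  have hr : z < x*y := by nlinarith
  have h1 : (x - y*z)^2 = v^2*w^2 - 1 := by nlinarith
  have h2 : (x*z - y)^2 = u^2*w^2 - 1 := by nlinarith
  have hB : 0 < v*(x*z - y) := mul_pos hv (by linarith)
  have key : u*(x - y*z) < v*(x*z - y) := by
    have e1 : (u*(x - y*z))^2 = u^2*(v^2*w^2-1) := by rw [mul_pow, h1]
    have e2 : (v*(x*z - y))^2 = v^2*(u^2*w^2-1) := by rw [mul_pow, h2]
    have hsq : (u*(x - y*z))^2 < (v*(x*z - y))^2 := by
      rw [e1, e2]; nlinarith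
    have h1' : 0 ≤ u*(x-y*z) := mul_nonneg hu.le (by linarith)
    nlinarith
  have h3 : w*z < w*(x*y) := by
    have := mul_lt_mul_of_pos_left hr hw; linarith
  nlinarith [key, h3]

set_option maxHeartbeats 1000000 in
private lemma collar_keyE (x y z u v w : ℝ) (hx : 1 < x) (hy : 1 < y) (hz : 1 < z)
    (hu : 0 < u) (hv : 0 < v) (hw : 0 < w)
    (hu2 : u^2 = x^2 - 1) (hv2 : v^2 = y^2 - 1) (hw2 : w^2 = z^2 - 1)
    (hc : x^2 + y^2 + z^2 = 2*x*y*z) :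
    u*x + v*y + w*z < u*(y*z) + v*(x*z) + w*(x*y) := by
  rcases lt_or_ge (y*z) x with h1 | h1
  · exact collar_bcase x y z u v w hx hy hz hu hv hw hu2 hv2 hw2 hc h1
  rcases lt_or_ge (x*z) y with h2 | h2
  · have := collar_bcase y x z v u w hy hx hz hv hu hw hv2 hu2 hw2 (by linarith) (by linarith [h2])
    nlinarith [this]
  rcases lt_or_ge (x*y) z with h3 | h3
  · have := collar_bcase z x y w u v hz hx hy hw hu hv hw2 hu2 hv2 (by linarith) (by linarith [h3])
    nlinarith [this]
  have g1 : 0 ≤ y*z - x := by linarith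
  have g2 : 0 ≤ x*z - y := by linarith
  have g3 : 0 ≤ x*y - z := by linarith
  have hsum : x*(y*z-x) + y*(x*z-y) + z*(x*y-z) = x*y*z := by ring_nf; linarith
  have hxyz : 1 < x*y*z := by nlinarith
  rcases lt_or_eq_of_le g1 with h1' | h1'
  · nlinarith [mul_pos hu h1', mul_nonneg hv.le g2, mul_nonneg hw.le g3]
  rcases lt_or_eq_of_le g2 with h2' | h2'
  · nlinarith [mul_pos hv h2', mul_nonneg hu.le g1, mul_nonneg hw.le g3]
  have h3' : 0 < x*y - z := by nlinarith
  nlinarith [mul_pos hw h3', mul_nonneg hu.le g1, mul_nonneg hv.le g2]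

private noncomputable def cf (a b c : ℝ) (s : ℝ) : ℝ :=
  cosh (a+s)^2 + cosh (b+s)^2 + cosh (c+s)^2 - 2 * cosh (a+s) * cosh (b+s) * cosh (c+s)

private noncomputable def cD (a b c : ℝ) (s : ℝ) : ℝ :=
  2*sinh (a+s)*cosh (a+s) + 2*sinh (b+s)*cosh (b+s) + 2*sinh (c+s)*cosh (c+s)
    - 2*(sinh (a+s)*cosh (b+s)*cosh (c+s) + cosh (a+s)*sinh (b+s)*cosh (c+s)
        + cosh (a+s)*cosh (b+s)*sinh (c+s))

private lemma cf_hasDerivAt (a b c s : ℝ) :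
    HasDerivAt (cf a b c) (cD a b c s) s := by
  have ha : HasDerivAt (fun s => Real.cosh (a+s)) (Real.sinh (a+s)) s := by
    simpa using ((hasDerivAt_id s).const_add a).cosh
  have hb : HasDerivAt (fun s => Real.cosh (b+s)) (Real.sinh (b+s)) s := by
    simpa using ((hasDerivAt_id s).const_add b).cosh
  have hc : HasDerivAt (fun s => Real.cosh (c+s)) (Real.sinh (c+s)) s := by
    simpa using ((hasDerivAt_id s).const_add c).cosh
  have h := (((ha.pow 2).add (hb.pow 2)).add (hc.pow 2)).sub
    ((((ha.const_mul 2).mul hb).mul hc))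
  convert h using 1
  · rfl
  · rfl
  · funext x; simp only [cf, Pi.add_apply, Pi.sub_apply, Pi.mul_apply, Pi.pow_apply]
  unfold cD; simp only [Pi.mul_apply]; ring

private lemma cD_neg (a b c s : ℝ) (ha : 0 < a+s) (hb : 0 < b+s) (hc : 0 < c+s)
    (hz : cf a b c s = 0) : cD a b c s < 0 := by
  have h := collar_keyE (cosh (a+s)) (cosh (b+s)) (cosh (c+s)) (sinh (a+s)) (sinh (b+s)) (sinh (c+s))
    (Real.one_lt_cosh.mpr (ne_of_gt ha)) (Real.one_lt_cosh.mpr (ne_of_gt hb))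
    (Real.one_lt_cosh.mpr (ne_of_gt hc))
    (Real.sinh_pos_iff.mpr ha) (Real.sinh_pos_iff.mpr hb) (Real.sinh_pos_iff.mpr hc)
    (by rw [Real.cosh_sq]; ring) (by rw [Real.cosh_sq]; ring) (by rw [Real.cosh_sq]; ring)
    (by unfold cf at hz; linarith)
  unfold cD; nlinarith [h]

private lemma collar_no_shift (a b c t : ℝ) (ha : 0 < a) (hb : 0 < b) (hc : 0 < c) (ht : 0 < t)
    (h0 : cosh a^2 + cosh b^2 + cosh c^2 = 2*cosh a*cosh b*cosh c)
    (h1 : cosh (a+t)^2 + cosh (b+t)^2 + cosh (c+t)^2 = 2*cosh (a+t)*cosh (b+t)*cosh (c+t)) :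
    False := by
  set f := cf a b c with hf
  have hD : ∀ s, HasDerivAt f (cD a b c s) s := fun s => cf_hasDerivAt a b c s
  have cont : Continuous f := by unfold f cf; fun_prop
  have hf0 : f 0 = 0 := by simp only [hf, cf, add_zero]; linarith
  have hft : f t = 0 := by simp only [hf, cf]; linarith
  have hd0 : cD a b c 0 < 0 :=
    cD_neg a b c 0 (by linarith) (by linarith) (by linarith) hf0
  have tend0 : Filter.Tendsto (slope f 0) (nhdsWithin 0 (Set.Ioi 0)) (nhds (cD a b c 0)) :=
    (hasDerivAt_iff_tendsto_slope.mp (hD 0)).mono_left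
      (nhdsWithin_mono _ (fun x hx => ne_of_gt hx))
  have ev1 : ∀ᶠ s in nhdsWithin 0 (Set.Ioi 0), slope f 0 s < 0 :=
    tend0.eventually_lt_const hd0
  have ev2 : Set.Ioo 0 t ∈ nhdsWithin (0:ℝ) (Set.Ioi 0) :=
    Ioo_mem_nhdsGT_of_mem ⟨le_refl 0, ht⟩
  obtain ⟨δ, hδs, hδm⟩ := (ev1.and (Filter.eventually_of_mem ev2 (fun x hx => hx))).exists
  have hδ0 : 0 < δ := hδm.1
  have hδt : δ < t := hδm.2
  have hfδ : f δ < 0 := by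
    have : (f δ - f 0) / (δ - 0) < 0 := by rwa [slope_def_field] at hδs
    rw [hf0, sub_zero, sub_zero] at this
    rcases div_neg_iff.mp this with ⟨h', h''⟩ | ⟨h', h''⟩
    · linarith
    · exact h'
  set T : Set ℝ := Set.Icc δ t ∩ {s | f s = 0} with hT
  have hTclosed : IsClosed T := isClosed_Icc.inter (isClosed_singleton.preimage cont)
  have hTne : T.Nonempty := ⟨t, ⟨hδt.le, le_refl t⟩, hft⟩
  have hTbdd : BddBelow T := ⟨δ, fun s hs => hs.1.1⟩
  set s0 := sInf T with hs0
  have hs0T : s0 ∈ T := hTclosed.csInf_mem hTne hTbdd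
  have hfs0 : f s0 = 0 := hs0T.2
  have hδs0 : δ < s0 := by
    rcases lt_or_eq_of_le hs0T.1.1 with h | h
    · exact h
    · exact absurd hfs0 (by rw [← h]; exact ne_of_lt hfδ)
  have hneg : ∀ s ∈ Set.Ioo δ s0, f s < 0 := by
    intro s hs
    by_contra hcon
    push_neg at hcon
    have hsub : Set.Icc (f δ) (f s) ⊆ f '' Set.Icc δ s :=
      intermediate_value_Icc hs.1.le cont.continuousOn
    obtain ⟨cc, hcc, hfcc⟩ := hsub ⟨hfδ.le, hcon⟩
    have hccT : cc ∈ T := ⟨⟨hcc.1, le_trans hcc.2 (le_trans hs.2.le hs0T.1.2)⟩, hfcc⟩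
    have h' := csInf_le hTbdd hccT
    have : s0 ≤ s := le_trans h' hcc.2
    exact absurd this (not_le.mpr hs.2)
  have tendL : Filter.Tendsto (slope f s0) (nhdsWithin s0 (Set.Iio s0)) (nhds (cD a b c s0)) :=
    (hasDerivAt_iff_tendsto_slope.mp (hD s0)).mono_left
      (nhdsWithin_mono _ (fun x hx => ne_of_lt hx))
  have evL : ∀ᶠ s in nhdsWithin s0 (Set.Iio s0), 0 ≤ slope f s0 s := by
    filter_upwards [Ioo_mem_nhdsLT_of_mem (⟨hδs0, le_refl s0⟩ : s0 ∈ Set.Ioc δ s0)] with s hs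
    rw [slope_def_field, hfs0, sub_zero]
    exact div_nonneg_of_nonpos (hneg s hs).le (by linarith [hs.2])
  have hge : 0 ≤ cD a b c s0 := ge_of_tendsto tendL evL
  have hlt : cD a b c s0 < 0 :=
    cD_neg a b c s0 (by linarith) (by linarith) (by linarith) hfs0
  linarith

theorem cpProj_injOn_collarH : Set.InjOn cpProj collarH := by
  intro p hp q hq heq
  obtain ⟨hp1, hp2, hp3, hpE⟩ := hp
  obtain ⟨hq1, hq2, hq3, hqE⟩ := hq
  simp only [cpProj, Prod.mk.injEq] at heq
  obtain ⟨heq1, heq2⟩ := heq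
  set t := q.1 - p.1 with htdef
  have e2 : q.2.1 - p.2.1 = t := by linarith
  have e3 : q.2.2 - p.2.2 = t := by linarith
  have ht : t = 0 := by
    rcases lt_trichotomy t 0 with h | h | h
    · exfalso
      apply collar_no_shift q.1 q.2.1 q.2.2 (-t) hq1 hq2 hq3 (by linarith)
      · linarith [hqE]
      · rw [show q.1 + -t = p.1 by linarith, show q.2.1 + -t = p.2.1 by linarith,
            show q.2.2 + -t = p.2.2 by linarith]
        linarith [hpE]
    · exact h
    · exfalso
      apply collar_no_shift p.1 p.2.1 p.2.2 t hp1 hp2 hp3 h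
      · linarith [hpE]
      · rw [show p.1 + t = q.1 by linarith, show p.2.1 + t = q.2.1 by linarith,
            show p.2.2 + t = q.2.2 by linarith]
        linarith [hqE]
  have : p.1 = q.1 := by linarith
  have h2 : p.2.1 = q.2.1 := by linarith
  have h3 : p.2.2 = q.2.2 := by linarith
  exact Prod.ext this (Prod.ext h2 h3)
end

section
/- Every point of 𝓗 = {(a,b,c) ∈ ℝ³ : a,b,c > 0, cosh²a + cosh²b + cosh²c = 2 cosh a cosh b cosh c} lies in the open cone over the triangle with vertices (1,1,0), (1,0,1), (0,1,1); that is, for (a,b,c) ∈ 𝓗 each of a+b−c, b+c−a, a+c−b is strictly positive. -/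
theorem collarH_subset_cone (a b c : ℝ) (ha : 0 < a) (hb : 0 < b) (hc : 0 < c)
    (h : Real.cosh a ^ 2 + Real.cosh b ^ 2 + Real.cosh c ^ 2 =
      2 * Real.cosh a * Real.cosh b * Real.cosh c) :
    0 < a + b - c ∧ 0 < b + c - a ∧ 0 < a + c - b := by
  have hsa : 0 < Real.sinh a := Real.sinh_pos_iff.mpr ha
  have hsb : 0 < Real.sinh b := Real.sinh_pos_iff.mpr hb
  have hs : 0 < Real.sinh a * Real.sinh b := mul_pos hsa hsb
  have key : (Real.cosh c - Real.cosh a * Real.cosh b) ^ 2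
      = Real.sinh a ^ 2 * Real.sinh b ^ 2 - 1 := by
    have h1 := Real.cosh_sq a
    have h2 := Real.cosh_sq b
    nlinarith [h, h1, h2]
  have hlt : (Real.cosh c - Real.cosh a * Real.cosh b) ^ 2
      < (Real.sinh a * Real.sinh b) ^ 2 := by nlinarith [key]
  have habs : |Real.cosh c - Real.cosh a * Real.cosh b| < Real.sinh a * Real.sinh b :=
    abs_lt_of_sq_lt_sq hlt hs.le
  rw [abs_lt] at habs
  have hcab : Real.cosh c < Real.cosh (a + b) := by
    rw [Real.cosh_add]; linarith [habs.2]
  have hcab2 : Real.cosh (a - b) < Real.cosh c := by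
    rw [Real.cosh_sub]; linarith [habs.1]
  have h1 : c < a + b := by
    have := Real.cosh_lt_cosh.mp hcab
    rwa [abs_of_pos hc, abs_of_pos (by linarith)] at this
  have h2 : |a - b| < c := by
    have := Real.cosh_lt_cosh.mp hcab2
    rwa [abs_of_pos hc] at this
  rw [abs_lt] at h2
  exact ⟨by linarith, by linarith, by linarith⟩
end

section
/- For fixed a, b > 0 with sinh a · sinh b > 1, the quadratic equation x² − 2 cosh a cosh b · x + cosh²a + cosh²b = 0 has two distinct real roots, both greater than 1. -/
theorem collar_quadratic_roots (a b : ℝ) (ha : 0 < a) (hb : 0 < b)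
    (h : 1 < Real.sinh a * Real.sinh b) :
    ∃ x₁ x₂ : ℝ, x₁ ≠ x₂ ∧ 1 < x₁ ∧ 1 < x₂ ∧
      (x₁ ^ 2 - 2 * Real.cosh a * Real.cosh b * x₁ + Real.cosh a ^ 2 + Real.cosh b ^ 2 = 0) ∧
      (x₂ ^ 2 - 2 * Real.cosh a * Real.cosh b * x₂ + Real.cosh a ^ 2 + Real.cosh b ^ 2 = 0) ∧
      ∀ x : ℝ, x ^ 2 - 2 * Real.cosh a * Real.cosh b * x + Real.cosh a ^ 2 + Real.cosh b ^ 2 = 0 →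
        x = x₁ ∨ x = x₂ := by
  set s := Real.sinh a * Real.sinh b with hs
  set C := Real.cosh a * Real.cosh b with hC
  set d := Real.sqrt (s ^ 2 - 1) with hd
  have hd2 : d ^ 2 = s ^ 2 - 1 := Real.sq_sqrt (by nlinarith)
  have hdpos : 0 < d := Real.sqrt_pos.mpr (by nlinarith)
  have hds : d < s := by
    nlinarith [Real.sqrt_nonneg (s ^ 2 - 1)]
  have hCs : 1 + s ≤ C := by
    have := Real.cosh_sub a b
    have h1 : (1:ℝ) ≤ Real.cosh (a - b) := Real.one_le_cosh _
    nlinarith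
  have hpyth : C ^ 2 - d ^ 2 = Real.cosh a ^ 2 + Real.cosh b ^ 2 := by
    rw [hd2]
    have ha2 : Real.cosh a ^ 2 = 1 + Real.sinh a ^ 2 := by
      have := Real.cosh_sq_sub_sinh_sq a; linarith
    have hb2 : Real.cosh b ^ 2 = 1 + Real.sinh b ^ 2 := by
      have := Real.cosh_sq_sub_sinh_sq b; linarith
    rw [hC, hs] at *
    nlinarith [ha2, hb2]
  refine ⟨C + d, C - d, by intro hne; nlinarith, by nlinarith, by nlinarith,
    by nlinarith, by nlinarith, ?_⟩
  intro x hx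
  have : (x - (C + d)) * (x - (C - d)) = 0 := by nlinarith
  rcases mul_eq_zero.mp this with h' | h'
  · left; linarith
  · right; linarith
end

section
/- For a > 0 and τ ∈ ℝ, let b = arccosh(cosh τ · coth a) and c = arccosh(cosh(a−τ) · coth a). Then (a,b,c) satisfies cosh²a + cosh²b + cosh²c = 2 cosh a cosh b cosh c. -/
/-- Inverse hyperbolic cosine on [1, ∞). -/
noncomputable def arcosh (x : ℝ) : ℝ := Real.log (x + Real.sqrt (x ^ 2 - 1))

lemma cosh_arcosh {x : ℝ} (hx : 1 ≤ x) : Real.cosh (arcosh x) = x := by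
  have h1 : (0:ℝ) ≤ x ^ 2 - 1 := by nlinarith
  have hs : Real.sqrt (x ^ 2 - 1) ^ 2 = x ^ 2 - 1 := Real.sq_sqrt h1
  have hs0 : 0 ≤ Real.sqrt (x ^ 2 - 1) := Real.sqrt_nonneg _
  have hy : 0 < x + Real.sqrt (x ^ 2 - 1) := by nlinarith
  have := Real.cosh_eq (arcosh x)
  rw [arcosh] at this ⊢
  rw [Real.cosh_eq, Real.exp_log hy, Real.exp_neg, Real.exp_log hy]
  have hinv : (x + Real.sqrt (x ^ 2 - 1))⁻¹ = x - Real.sqrt (x ^ 2 - 1) := by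
    rw [inv_eq_iff_eq_inv, eq_comm, inv_eq_iff_eq_inv, eq_comm]
    · field_simp
      nlinarith
  rw [hinv]; ring

theorem collar_equation_of_fenchel_nielsen (a τ : ℝ) (ha : 0 < a) :
    let b := arcosh (Real.cosh τ * (Real.cosh a / Real.sinh a))
    let c := arcosh (Real.cosh (a - τ) * (Real.cosh a / Real.sinh a))
    Real.cosh a ^ 2 + Real.cosh b ^ 2 + Real.cosh c ^ 2 =
      2 * Real.cosh a * Real.cosh b * Real.cosh c := by
  intro b c
  have hsinh : 0 < Real.sinh a := Real.sinh_pos_iff.2 ha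
  have hlt : Real.sinh a < Real.cosh a := Real.sinh_lt_cosh a
  have hcoth : 1 < Real.cosh a / Real.sinh a := (one_lt_div hsinh).2 hlt
  have h1 : 1 ≤ Real.cosh τ * (Real.cosh a / Real.sinh a) := by
    nlinarith [Real.one_le_cosh τ]
  have h2 : 1 ≤ Real.cosh (a - τ) * (Real.cosh a / Real.sinh a) := by
    nlinarith [Real.one_le_cosh (a - τ)]
  have hb : Real.cosh b = Real.cosh τ * (Real.cosh a / Real.sinh a) := cosh_arcosh h1
  have hc : Real.cosh c = Real.cosh (a - τ) * (Real.cosh a / Real.sinh a) := cosh_arcosh h2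
  rw [hb, hc, Real.cosh_sub]
  have hpy : Real.cosh a ^ 2 - Real.sinh a ^ 2 = 1 := Real.cosh_sq_sub_sinh_sq a
  have hpyt : Real.cosh τ ^ 2 - Real.sinh τ ^ 2 = 1 := Real.cosh_sq_sub_sinh_sq τ
  field_simp
  linear_combination (-(Real.sinh a^2)) * hpyt + (-(Real.cosh τ^2)) * hpy
end

section
/- For a > 0 and τ ∈ ℝ, the triples (a, arccosh(cosh τ coth a), arccosh(cosh(a−τ) coth a)) converge, as a → ∞ with τ/a fixed equal to s ∈ (0,1), to satisfy the triangle equality asymptotically: arccosh(cosh τ coth a) − τ → 0 and arccosh(cosh(a−τ) coth a) − (a−τ) → 0 as a → ∞ with τ = s·a. -/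
open Filter Topology

lemma arcosh_cosh {t : ℝ} (ht : 0 ≤ t) : arcosh (Real.cosh t) = t := by
  unfold arcosh
  have h : Real.cosh t ^ 2 - 1 = Real.sinh t ^ 2 := by
    have := Real.cosh_sq_sub_sinh_sq t; nlinarith
  rw [h, Real.sqrt_sq (Real.sinh_nonneg_iff.2 ht), Real.cosh_add_sinh, Real.log_exp]

lemma arcosh_mono {x y : ℝ} (hx : 1 ≤ x) (hxy : x ≤ y) : arcosh x ≤ arcosh y := by
  unfold arcosh
  have h1 : (0:ℝ) < x + Real.sqrt (x ^ 2 - 1) := by positivity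
  apply Real.log_le_log h1
  gcongr

lemma arcosh_le {y : ℝ} (hy : 1 ≤ y) : arcosh y ≤ Real.log 2 + Real.log y := by
  unfold arcosh
  rw [← Real.log_mul two_ne_zero (by linarith)]
  apply Real.log_le_log (by positivity)
  have : Real.sqrt (y ^ 2 - 1) ≤ y := by
    have h1 : Real.sqrt (y ^ 2 - 1) ≤ Real.sqrt (y ^ 2) := Real.sqrt_le_sqrt (by nlinarith)
    rwa [Real.sqrt_sq (by linarith)] at h1
  linarith

lemma coth_tendsto : Tendsto (fun a => Real.cosh a / Real.sinh a) atTop (𝓝 1) := by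
  have h : ∀ᶠ a in atTop, (1 + Real.exp (-2*a)) / (1 - Real.exp (-2*a)) = Real.cosh a / Real.sinh a := by
    filter_upwards [eventually_gt_atTop 0] with a ha
    have hs : Real.sinh a > 0 := Real.sinh_pos_iff.2 ha
    rw [Real.cosh_eq, Real.sinh_eq]
    have he : Real.exp a > 0 := Real.exp_pos a
    have he2 : Real.exp a - Real.exp (-a) > 0 := by
      rw [Real.sinh_eq] at hs; linarith
    have hlt : Real.exp (-2*a) < 1 := Real.exp_lt_one_iff.2 (by linarith)
    rw [div_eq_div_iff (by linarith) (by positivity)]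
    have : Real.exp (-2*a) * Real.exp a = Real.exp (-a) := by
      rw [← Real.exp_add]; ring_nf
    nlinarith [this]
  apply Tendsto.congr' h
  have : Tendsto (fun a : ℝ => Real.exp (-2*a)) atTop (𝓝 0) := by
    apply Real.tendsto_exp_atBot.comp
    exact (tendsto_const_mul_atBot_of_neg (by norm_num)).2 tendsto_id
  have h2 : Tendsto (fun a : ℝ => (1 + Real.exp (-2*a)) / (1 - Real.exp (-2*a))) atTop
      (𝓝 ((1 + 0) / (1 - 0))) :=
    (tendsto_const_nhds.add this).div (tendsto_const_nhds.sub this) (by norm_num)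
  simpa using h2

lemma key (s : ℝ) (hs : 0 < s) :
    Tendsto (fun a : ℝ => arcosh (Real.cosh (s * a) * (Real.cosh a / Real.sinh a)) - s * a)
      atTop (𝓝 0) := by
  have hsa : Tendsto (fun a : ℝ => s * a) atTop atTop :=
    (tendsto_const_mul_atTop_of_pos hs).2 tendsto_id
  -- upper bound tends to 0
  have hub : Tendsto (fun a : ℝ => Real.log 2 + Real.log (Real.cosh a / Real.sinh a)
      + Real.log ((1 + Real.exp (-2 * (s*a))) / 2)) atTop (𝓝 0) := by
    have h1 : Tendsto (fun a : ℝ => Real.log (Real.cosh a / Real.sinh a)) atTop (𝓝 0) := by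
      have := (Real.continuousAt_log one_ne_zero).tendsto.comp coth_tendsto
      simpa [Function.comp_def] using this
    have h2 : Tendsto (fun a : ℝ => Real.log ((1 + Real.exp (-2 * (s*a))) / 2)) atTop
        (𝓝 (Real.log (1/2))) := by
      have he : Tendsto (fun a : ℝ => Real.exp (-2 * (s*a))) atTop (𝓝 0) := by
        apply Real.tendsto_exp_atBot.comp
        exact ((tendsto_const_mul_atBot_of_neg (by norm_num)).2 hsa)
      have hd : Tendsto (fun a : ℝ => (1 + Real.exp (-2 * (s*a))) / 2) atTop
          (𝓝 ((1 + 0) / 2)) := (tendsto_const_nhds.add he).div_const 2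
      have hcont := (Real.continuousAt_log (by norm_num : (1:ℝ)/2 ≠ 0)).tendsto.comp
        (by simpa using hd)
      simpa [Function.comp_def] using hcont
    have h3 : Tendsto (fun a : ℝ => Real.log 2 + Real.log (Real.cosh a / Real.sinh a)
        + Real.log ((1 + Real.exp (-2 * (s*a))) / 2)) atTop
        (𝓝 (Real.log 2 + 0 + Real.log (1/2))) := (tendsto_const_nhds.add h1).add h2
    have hz : Real.log 2 + 0 + Real.log (1/2) = 0 := by
      rw [Real.log_div one_ne_zero two_ne_zero, Real.log_one]; ring
    rwa [hz] at h3
  apply tendsto_of_tendsto_of_tendsto_of_le_of_le' tendsto_const_nhds hub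
  · -- lower bound: 0 ≤ F
    filter_upwards [eventually_gt_atTop 0, hsa.eventually (eventually_ge_atTop 0)] with a ha hta
    have hsinh : 0 < Real.sinh a := Real.sinh_pos_iff.2 ha
    have hcoth : 1 ≤ Real.cosh a / Real.sinh a :=
      (one_le_div hsinh).2 (Real.sinh_lt_cosh a).le
    have hc1 : 1 ≤ Real.cosh (s*a) := Real.one_le_cosh _
    have := arcosh_mono hc1 (le_mul_of_one_le_right (by linarith) hcoth)
    rw [arcosh_cosh hta] at this
    linarith
  · -- upper bound
    filter_upwards [eventually_gt_atTop 0, hsa.eventually (eventually_ge_atTop 0)] with a ha hta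
    have hsinh : 0 < Real.sinh a := Real.sinh_pos_iff.2 ha
    have hcoth : 1 ≤ Real.cosh a / Real.sinh a :=
      (one_le_div hsinh).2 (Real.sinh_lt_cosh a).le
    have hc1 : 1 ≤ Real.cosh (s*a) := Real.one_le_cosh _
    have hy : 1 ≤ Real.cosh (s*a) * (Real.cosh a / Real.sinh a) :=
      one_le_mul_of_one_le_of_one_le hc1 hcoth
    have h1 := arcosh_le hy
    have hlog : Real.log (Real.cosh (s*a) * (Real.cosh a / Real.sinh a))
        = Real.log (Real.cosh (s*a)) + Real.log (Real.cosh a / Real.sinh a) :=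
      Real.log_mul (by linarith) (by linarith)
    have hcosh : Real.cosh (s*a) = Real.exp (s*a) * ((1 + Real.exp (-2*(s*a))) / 2) := by
      rw [Real.cosh_eq, show (-2*(s*a)) = -(s*a) + -(s*a) by ring, Real.exp_add,
        Real.exp_neg]
      have h := Real.exp_ne_zero (s*a)
      field_simp
    have hlc : Real.log (Real.cosh (s*a)) = s*a + Real.log ((1 + Real.exp (-2*(s*a))) / 2) := by
      rw [hcosh, Real.log_mul (Real.exp_ne_zero _) (by positivity), Real.log_exp]
    rw [hlog, hlc] at h1
    linarith

theorem collar_asymptotic_to_triangle (s : ℝ) (hs0 : 0 < s) (hs1 : s < 1) :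
    Tendsto (fun a : ℝ =>
        arcosh (Real.cosh (s * a) * (Real.cosh a / Real.sinh a)) - s * a)
      atTop (𝓝 0) ∧
    Tendsto (fun a : ℝ =>
        arcosh (Real.cosh (a - s * a) * (Real.cosh a / Real.sinh a)) - (a - s * a))
      atTop (𝓝 0) := by
  refine ⟨key s hs0, ?_⟩
  have := key (1 - s) (by linarith)
  apply this.congr
  intro a
  ring_nf
end

section
/- For all a, b > 0 with sinh a · sinh b ≥ 1, define the quadratic form on ℝ² by ds²(dx,dy) = (a² + (a/sinh a)²·(sinh(b·y)/sinh b)²)·dx² + 2ab·√(1 − 1/(sinh a sinh b)²)·dx·dy + b²·dy², for any fixed y ∈ [−1,1]. Then |ds²(dx,dy) − (a·dx + b·dy)²| ≤ 2(dx² + dy²) for all (dx,dy) ∈ ℝ². -/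
lemma collar_aux (E c dx dy : ℝ) (hE0 : 0 ≤ E) (hE1 : E ≤ 1) (hc0 : 0 ≤ c) (hc1 : c ≤ 1) :
    |E * dx ^ 2 - 2 * c * dx * dy| ≤ 2 * (dx ^ 2 + dy ^ 2) := by
  rw [abs_le]
  constructor
  · nlinarith [mul_nonneg hc0 (sq_nonneg (dx - dy)), mul_nonneg hc0 (sq_nonneg (dx + dy)),
      mul_nonneg hE0 (sq_nonneg dx),
      mul_nonneg (sub_nonneg.mpr hc1) (add_nonneg (sq_nonneg dx) (sq_nonneg dy))]
  · nlinarith [mul_nonneg hc0 (sq_nonneg (dx - dy)), mul_nonneg hc0 (sq_nonneg (dx + dy)),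
      mul_nonneg (sub_nonneg.mpr hE1) (sq_nonneg dx),
      mul_nonneg (sub_nonneg.mpr hc1) (add_nonneg (sq_nonneg dx) (sq_nonneg dy))]


theorem collar_metric_comparison (a b y : ℝ) (ha : 0 < a) (hb : 0 < b)
    (hab : 1 ≤ Real.sinh a * Real.sinh b) (hy : y ∈ Set.Icc (-1 : ℝ) 1)
    (dx dy : ℝ) :
    |((a ^ 2 + (a / Real.sinh a) ^ 2 * (Real.sinh (b * y) / Real.sinh b) ^ 2) * dx ^ 2 +
        2 * a * b * Real.sqrt (1 - (1 / (Real.sinh a * Real.sinh b)) ^ 2) * dx * dy +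
        b ^ 2 * dy ^ 2) -
      (a * dx + b * dy) ^ 2| ≤ 2 * (dx ^ 2 + dy ^ 2) := by
  obtain ⟨hy1, hy2⟩ := hy
  set sa := Real.sinh a with hsa
  set sb := Real.sinh b with hsb
  have hsa0 : 0 < sa := Real.sinh_pos_iff.mpr ha
  have hsb0 : 0 < sb := Real.sinh_pos_iff.mpr hb
  have hasa : a ≤ sa := (Real.self_lt_sinh_iff.mpr ha).le
  have hbsb : b ≤ sb := (Real.self_lt_sinh_iff.mpr hb).le
  set t : ℝ := 1 / (sa * sb) with ht
  have ht0 : 0 < t := by positivity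
  have ht1 : t ≤ 1 := by
    rw [ht, div_le_one (by positivity)]; linarith
  set s : ℝ := Real.sqrt (1 - t ^ 2) with hs
  have hnn : 0 ≤ 1 - t ^ 2 := by nlinarith
  have hs0 : 0 ≤ s := Real.sqrt_nonneg _
  have hs1 : s ≤ 1 := by
    calc s ≤ Real.sqrt 1 := Real.sqrt_le_sqrt (by nlinarith)
    _ = 1 := Real.sqrt_one
  have hsge : 1 - t ^ 2 ≤ s := by
    rw [hs]
    nlinarith [Real.sq_sqrt hnn, Real.sqrt_nonneg (1 - t ^ 2), sq_nonneg (Real.sqrt (1 - t^2) - (1 - t^2))]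
  -- c := a*b*(1-s) ≤ 1
  clear_value sa sb t s
  have hc0 : 0 ≤ a * b * (1 - s) := by
    apply mul_nonneg (by positivity); linarith
  have hc1 : a * b * (1 - s) ≤ 1 := by
    have h1 : 1 - s ≤ t ^ 2 := by linarith
    have hab' : a * b ≤ sa * sb := mul_le_mul hasa hbsb hb.le hsa0.le
    have h2 : a * b * (1 - s) ≤ sa * sb * t ^ 2 := by
      nlinarith [mul_pos ha hb, sq_nonneg t, mul_pos hsa0 hsb0]
    have h3 : sa * sb * t ^ 2 = t := by
      rw [ht]; field_simp
    nlinarith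
  -- E ≤ 1
  have hE0 : 0 ≤ (a / sa) ^ 2 * (Real.sinh (b * y) / sb) ^ 2 := by positivity
  have hE1 : (a / sa) ^ 2 * (Real.sinh (b * y) / sb) ^ 2 ≤ 1 := by
    have h1 : (a / sa) ^ 2 ≤ 1 := by
      rw [div_pow, div_le_one (by positivity)]; nlinarith
    have h2 : (Real.sinh (b * y) / sb) ^ 2 ≤ 1 := by
      rw [div_pow, div_le_one (by positivity)]
      have hle : Real.sinh (b * y) ≤ sb := by
        rw [hsb]; exact Real.sinh_le_sinh.mpr (by nlinarith)
      have hge : -sb ≤ Real.sinh (b * y) := by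
        rw [hsb, ← Real.sinh_neg]
        exact Real.sinh_le_sinh.mpr (by nlinarith)
      nlinarith
    exact mul_le_one₀ h1 (sq_nonneg _) h2
  have hkey : ((a ^ 2 + (a / sa) ^ 2 * (Real.sinh (b * y) / sb) ^ 2) * dx ^ 2 +
        2 * a * b * s * dx * dy + b ^ 2 * dy ^ 2) - (a * dx + b * dy) ^ 2 =
      (a / sa) ^ 2 * (Real.sinh (b * y) / sb) ^ 2 * dx ^ 2
        - 2 * (a * b * (1 - s)) * dx * dy := by ring
  rw [hkey]
  exact collar_aux _ _ dx dy hE0 hE1 hc0 hc1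
end
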